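/- Let f : {±1}ⁿ → ℝ be a multilinear polynomial (random variable over uniform x) with E[f] = 0, E[f²] = 1, and E[f⁴] ≤ 15. Then Pr[f(x) ≥ 0] ≥ 0.03. -/

import Mathlib

open Finset

/-- The ±1 value associated to a Boolean bit. -/
noncomputable def chi (b : Bool) : ℝ := if b then 1 else -1

theorem prob_nonneg_of_moments (n : ℕ) (f : (Fin n → ℝ) → ℝ)
    (h1 : (∑ x : Fin n → Bool, f (fun i => chi (x i))) / 2 ^ n = 0)
    (h2 : (∑ x : Fin n → Bool, (f (fun i => chi (x i))) ^ 2) / 2 ^ n = 1)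
    (h4 : (∑ x : Fin n → Bool, (f (fun i => chi (x i))) ^ 4) / 2 ^ n ≤ 15) :
    ((Finset.univ.filter (fun x : Fin n → Bool => 0 ≤ f (fun i => chi (x i)))).card : ℝ)
      / 2 ^ n ≥ 0.03 := by
  have hp : (0:ℝ) < 2 ^ n := by positivity
  set g : (Fin n → Bool) → ℝ := fun x => f (fun i => chi (x i)) with hg
  have hS1 : ∑ x : Fin n → Bool, g x = 0 := by
    field_simp at h1; simpa using h1
  have hS2 : ∑ x : Fin n → Bool, (g x) ^ 2 = 2 ^ n := by
    field_simp at h2; linarith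
  have hS4 : ∑ x : Fin n → Bool, (g x) ^ 4 ≤ 15 * 2 ^ n := by
    rw [div_le_iff₀ hp] at h4; linarith
  have key : ∀ t : ℝ, 0.13 * t + 0.06 * t ^ 2 - 0.002 * t ^ 4
      ≤ (if 0 ≤ t then (1:ℝ) else 0) := by
    intro t
    by_cases h : 0 ≤ t
    · simp only [h, if_true]
      nlinarith [sq_nonneg (t ^ 2 - 19), sq_nonneg (t - 65 / 16)]
    · simp only [h, if_false]
      push_neg at h
      have h' : 0 ≤ -t := by linarith
      nlinarith [sq_nonneg (t ^ 2 + 3 * t), mul_nonneg h' (sq_nonneg (t + 3.25)), h']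
  have hsum : ((Finset.univ.filter (fun x : Fin n → Bool => 0 ≤ g x)).card : ℝ)
      = ∑ x : Fin n → Bool, (if 0 ≤ g x then (1:ℝ) else 0) := by
    rw [Finset.sum_boole]
  have hle : ∑ x : Fin n → Bool, (0.13 * g x + 0.06 * (g x) ^ 2 - 0.002 * (g x) ^ 4)
      ≤ ∑ x : Fin n → Bool, (if 0 ≤ g x then (1:ℝ) else 0) :=
    Finset.sum_le_sum (fun x _ => key (g x))
  rw [Finset.sum_sub_distrib, Finset.sum_add_distrib, ← Finset.mul_sum, ← Finset.mul_sum,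
    ← Finset.mul_sum, hS1, hS2] at hle
  rw [ge_iff_le, le_div_iff₀ hp, hsum]
  nlinarith [hle, hS4]
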